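/- Let n be odd, let f₀, f₁, f₂, f₃, f₄, f₅ be monic polynomials in F₂[x] with f₅|f₄|f₃|f₂|f₁|f₀|(xⁿ−1) and deg f₅ < n, and let C be the cyclic code of length n over R given by the ideal of R[x]/(xⁿ−1) generated by f₀, uf₁, u²f₂, u³f₃, u⁴f₄, u⁵f₅ (coefficients embedded via F₂ ↪ R). Then there exist two distinct codewords c₁, c₂ ∈ C with d_c(c₁, c₂) ≤ min₀≤i≤₅ deg(f_i) + 1; that is, the minimum edit distance of C is at most min_i deg(f_i) + 1. -/

import Mathlib

open Polynomial

namespace Levenshtein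

/-- Costs of edit operations (as in the older Mathlib `Levenshtein.Cost`). -/
structure Cost (α β δ : Type*) where
  delete : α → δ
  insert : β → δ
  substitute : α → β → δ

/-- Unit costs for deletion, insertion and substitution (older Mathlib `defaultCost`). -/
def defaultCost {α : Type*} [DecidableEq α] : Cost α α ℕ where
  delete _ := 1
  insert _ := 1
  substitute a b := if a = b then 0 else 1

/-- One step of the dynamic program (older Mathlib `Levenshtein.impl`). -/
def impl {α β δ : Type*} [AddZeroClass δ] [Min δ]
    (C : Cost α β δ) (xs : List α) (y : β) (d : {r : List δ // 0 < r.length}) :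
    {r : List δ // 0 < r.length} :=
  let ⟨ds, w⟩ := d
  xs.zip (ds.zip ds.tail) |>.foldr
    (init := ⟨[ds.getLast (List.ne_nil_of_length_pos w) + C.insert y], by simp⟩)
    (fun ⟨x, d₀, d₁⟩ ⟨r, w⟩ =>
      ⟨min (C.delete x + r[0]) (min (C.insert y + d₀) (C.substitute x y + d₁)) :: r, by simp⟩)

end Levenshtein

/-- Edit distances of all suffixes (older Mathlib `suffixLevenshtein`). -/
def suffixLevenshtein {α β δ : Type*} [AddZeroClass δ] [Min δ]
    (C : Levenshtein.Cost α β δ) (xs : List α) (ys : List β) :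
    {r : List δ // 0 < r.length} :=
  ys.foldr
    (Levenshtein.impl C xs)
    (xs.foldr (init := ⟨[0], by simp⟩) (fun a ⟨r, w⟩ => ⟨(C.delete a + r[0]) :: r, by simp⟩))

/-- The Levenshtein edit distance with cost `C` (older Mathlib `levenshtein`). -/
def levenshtein {α β δ : Type*} [AddZeroClass δ] [Min δ]
    (C : Levenshtein.Cost α β δ) (xs : List α) (ys : List β) : δ :=
  let ⟨r, _⟩ := suffixLevenshtein C xs ys
  r[0]

/-- The ring `R = F₂[u]/(u⁶)`. -/
abbrev R : Type := AdjoinRoot (X ^ 6 : (ZMod 2)[X])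

noncomputable instance : DecidableEq R := Classical.decEq _

/-- `u ∈ R`, the image of `X`. -/
noncomputable def u : R := AdjoinRoot.root _

/-- Lift a binary polynomial to a polynomial over `R` via `F₂ ↪ R`. -/
noncomputable def rmap (f : (ZMod 2)[X]) : R[X] := f.map (algebraMap (ZMod 2) R)

/-- The quotient map `R[x] → R[x]/(xⁿ - 1)`. -/
noncomputable def mkq (n : ℕ) : R[X] →+* R[X] ⧸ Ideal.span ({(X : R[X]) ^ n - 1} : Set R[X]) :=
  Ideal.Quotient.mk _

/-- The cyclic code of length `n` over `R` given (as a set of coefficient vectors) by the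
ideal of `R[x]/(xⁿ - 1)` generated by `f₀, u f₁, u² f₂, u³ f₃, u⁴ f₄, u⁵ f₅`. -/
noncomputable def cyclicCode (n : ℕ) (f₀ f₁ f₂ f₃ f₄ f₅ : (ZMod 2)[X]) :
    Set (Fin n → R) :=
  {c | mkq n (∑ i : Fin n, Polynomial.C (c i) * X ^ (i : ℕ)) ∈
    Ideal.span ({mkq n (rmap f₀), mkq n (Polynomial.C u * rmap f₁),
      mkq n (Polynomial.C (u ^ 2) * rmap f₂), mkq n (Polynomial.C (u ^ 3) * rmap f₃),
      mkq n (Polynomial.C (u ^ 4) * rmap f₄), mkq n (Polynomial.C (u ^ 5) * rmap f₅)} :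
        Set (R[X] ⧸ Ideal.span ({(X : R[X]) ^ n - 1} : Set R[X])))}

section LevAux
variable {α β δ : Type*} [AddZeroClass δ] [Min δ] (C : Levenshtein.Cost α β δ)

theorem lev_impl_cons (x : α) (xs : List α) (y : β) (d : δ) (ds : List δ)
    (w : 0 < (d :: ds).length) (hw : 0 < List.length ds) :
    Levenshtein.impl C (x :: xs) y ⟨d :: ds, w⟩ =
      let ⟨r, w⟩ := Levenshtein.impl C xs y ⟨ds, hw⟩
      ⟨min (C.delete x + r[0]) (min (C.insert y + d) (C.substitute x y + ds[0]'hw)) :: r,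
        by simp⟩ :=
  match ds, hw with | _ :: _, _ => rfl

theorem lev_impl_length (xs : List α) (y : β) (d : {r : List δ // 0 < r.length})
    (w : d.1.length = xs.length + 1) :
    (Levenshtein.impl C xs y d).1.length = xs.length + 1 := by
  induction xs generalizing d with
  | nil => rfl
  | cons x xs ih =>
    match d, w with
    | ⟨d₁ :: d₂ :: ds, _⟩, w =>
      rw [lev_impl_cons C x xs y d₁ (d₂ :: ds) (by simp) (by simp)]
      simp only [List.length_cons]
      congr 1
      exact ih ⟨d₂ :: ds, (by simp)⟩ (by simpa using w)

theorem lev_suffix_length (xs : List α) (ys : List β) :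
    (suffixLevenshtein C xs ys).1.length = xs.length + 1 := by
  induction ys with
  | nil =>
    dsimp [suffixLevenshtein]
    induction xs with
    | nil => rfl
    | cons _ xs ih => simp_all
  | cons y ys ih =>
    dsimp [suffixLevenshtein]
    rw [lev_impl_length]
    exact ih

theorem lev_suffix_aux {x y : {r : List δ // 0 < r.length}}
    (w₀ : x.1[0]'x.2 = y.1[0]'y.2) (w : x.1.tail = y.1.tail) : x = y := by
  match x, y with
  | ⟨hx :: tx, _⟩, ⟨hy :: ty, _⟩ => simp_all

theorem lev_suffix_cons₂ (xs : List α) (y : β) (ys : List β) :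
    suffixLevenshtein C xs (y :: ys) = Levenshtein.impl C xs y (suffixLevenshtein C xs ys) :=
  rfl

theorem lev_suffix_cons₁_fst (x : α) (xs : List α) (ys : List β) :
    (suffixLevenshtein C (x :: xs) ys).1 =
      levenshtein C (x :: xs) ys :: (suffixLevenshtein C xs ys).1 := by
  induction ys with
  | nil =>
    dsimp [levenshtein, suffixLevenshtein]
    rfl
  | cons y ys ih =>
    have hs : suffixLevenshtein C (x :: xs) ys =
        ⟨levenshtein C (x :: xs) ys :: (suffixLevenshtein C xs ys).1, by simp⟩ := Subtype.ext ih
    have e : (suffixLevenshtein C (x :: xs) (y :: ys)).1.tail =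
        (suffixLevenshtein C xs (y :: ys)).1 := by
      rw [lev_suffix_cons₂, hs, lev_impl_cons C x xs y _ _ _ (by simp [lev_suffix_length])]
      rfl
    have key : ∀ (s : {r : List δ // 0 < r.length}), s.1 = s.1[0]'s.2 :: s.1.tail :=
      fun ⟨a :: l, _⟩ => rfl
    rw [← e]
    exact key _

theorem lev_cons_cons (x : α) (xs : List α) (y : β) (ys : List β) :
    levenshtein C (x :: xs) (y :: ys) =
      min (C.delete x + levenshtein C xs (y :: ys))
        (min (C.insert y + levenshtein C (x :: xs) ys)
          (C.substitute x y + levenshtein C xs ys)) := by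
  have hs : suffixLevenshtein C (x :: xs) ys =
      ⟨levenshtein C (x :: xs) ys :: (suffixLevenshtein C xs ys).1, by simp⟩ :=
    Subtype.ext (lev_suffix_cons₁_fst C x xs ys)
  have h2 : (suffixLevenshtein C (x :: xs) (y :: ys)).1[0]'(by simp [lev_suffix_length]) =
      min (C.delete x + levenshtein C xs (y :: ys))
        (min (C.insert y + levenshtein C (x :: xs) ys)
          (C.substitute x y + levenshtein C xs ys)) := by
    simp only [lev_suffix_cons₂ C (x :: xs), hs]
    have himpl := lev_impl_cons C x xs y (levenshtein C (x :: xs) ys)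
      (suffixLevenshtein C xs ys).1 (by simp) (by simp [lev_suffix_length])
    have g : ∀ s t : {r : List δ // 0 < r.length}, s = t → s.1[0]'s.2 = t.1[0]'t.2 := by
      rintro s t rfl
      rfl
    refine (g _ _ himpl).trans ?_
    rfl
  exact h2

end LevAux

lemma lev_ofFn_le {α : Type*} [DecidableEq α] :
    ∀ (n : ℕ) (f g : Fin n → α),
      levenshtein Levenshtein.defaultCost (List.ofFn f) (List.ofFn g)
        ≤ ∑ i : Fin n, (if f i = g i then 0 else 1)
  | 0, f, g => by rfl
  | n + 1, f, g => by
    rw [List.ofFn_succ, List.ofFn_succ, lev_cons_cons, Fin.sum_univ_succ]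
    refine le_trans ((min_le_right _ _).trans (min_le_right _ _)) ?_
    refine add_le_add ?_ (lev_ofFn_le n _ _)
    simp [Levenshtein.defaultCost]

lemma u_pow_five_ne_zero : u ^ 5 ≠ 0 := by
  have : u ^ 5 = AdjoinRoot.mk (X ^ 6 : (ZMod 2)[X]) (X ^ 5) := by
    rw [u, ← AdjoinRoot.mk_X, ← map_pow]
  rw [this, Ne, AdjoinRoot.mk_eq_zero]
  intro h
  have h5 : (X : (ZMod 2)[X]) ^ 5 ≠ 0 := pow_ne_zero _ X_ne_zero
  have := Polynomial.natDegree_le_of_dvd h h5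
  simp [natDegree_X_pow] at this


/-- for `n` odd and `f₅|f₄|f₃|f₂|f₁|f₀|(xⁿ-1)` monic in `F₂[x]` with
`deg f₅ < n`, the cyclic code `⟨f₀, uf₁, u²f₂, u³f₃, u⁴f₄, u⁵f₅⟩` contains two distinct
codewords at edit distance at most `min_i deg(f_i) + 1`. -/
theorem edit_distance_le_min_deg_add_one (n : ℕ) (hodd : Odd n)
    (f₀ f₁ f₂ f₃ f₄ f₅ : (ZMod 2)[X])
    (hm₀ : f₀.Monic) (hm₁ : f₁.Monic) (hm₂ : f₂.Monic) (hm₃ : f₃.Monic)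
    (hm₄ : f₄.Monic) (hm₅ : f₅.Monic)
    (h54 : f₅ ∣ f₄) (h43 : f₄ ∣ f₃) (h32 : f₃ ∣ f₂) (h21 : f₂ ∣ f₁) (h10 : f₁ ∣ f₀)
    (h0 : f₀ ∣ X ^ n - 1) (hdeg : f₅.natDegree < n) :
    ∃ c₁ ∈ cyclicCode n f₀ f₁ f₂ f₃ f₄ f₅, ∃ c₂ ∈ cyclicCode n f₀ f₁ f₂ f₃ f₄ f₅,
      c₁ ≠ c₂ ∧
      levenshtein Levenshtein.defaultCost (List.ofFn c₁) (List.ofFn c₂)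
        ≤ min f₀.natDegree (min f₁.natDegree (min f₂.natDegree
            (min f₃.natDegree (min f₄.natDegree f₅.natDegree)))) + 1 := by
  set d := f₅.natDegree with hd
  set g : R[X] := Polynomial.C (u ^ 5) * rmap f₅ with hg
  have hgdeg : g.natDegree < n := by
    refine lt_of_le_of_lt ((natDegree_C_mul_le _ _).trans natDegree_map_le) hdeg
  -- the two codewords
  refine ⟨0, ?_, fun i => g.coeff i, ?_, ?_, ?_⟩
  · simp only [cyclicCode, Set.mem_setOf_eq]
    have : (∑ i : Fin n, Polynomial.C ((0 : Fin n → R) i) * X ^ (i : ℕ)) = 0 := by simp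
    rw [this, map_zero]
    exact zero_mem _
  · simp only [cyclicCode, Set.mem_setOf_eq]
    have hsum : (∑ i : Fin n, Polynomial.C (g.coeff i) * X ^ (i : ℕ)) = g := by
      rw [Fin.sum_univ_eq_sum_range (fun i => Polynomial.C (g.coeff i) * X ^ i)]
      simp only [C_mul_X_pow_eq_monomial]
      exact (as_sum_range' g n hgdeg).symm
    rw [hsum]
    refine Ideal.subset_span ?_
    simp only [Set.mem_insert_iff, Set.mem_singleton_iff]
    right; right; right; right; right; trivial
  · intro h
    have := congrFun h ⟨d, hdeg⟩
    simp only [Pi.zero_apply] at this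
    apply u_pow_five_ne_zero
    have hcoeff : g.coeff d = u ^ 5 := by
      rw [hg, coeff_C_mul, rmap, coeff_map, hd, hm₅.coeff_natDegree, map_one, mul_one]
    rw [← hcoeff, ← this]
  · have key : levenshtein Levenshtein.defaultCost (List.ofFn (0 : Fin n → R))
        (List.ofFn (fun i : Fin n => g.coeff ↑i)) ≤ d + 1 := by
      refine le_trans (lev_ofFn_le n _ _) ?_
      have hle : ∀ i : Fin n, (if (0 : Fin n → R) i = g.coeff i then 0 else 1)
          ≤ (if f₅.coeff i = 0 then 0 else 1) := by
        intro i
        by_cases hc : f₅.coeff (i : ℕ) = 0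
        · have : g.coeff (i : ℕ) = 0 := by
            rw [hg, coeff_C_mul, rmap, coeff_map, hc, map_zero, mul_zero]
          simp [hc, this]
        · split <;> simp
      refine le_trans (Finset.sum_le_sum (fun i _ => hle i)) ?_
      rw [Fin.sum_univ_eq_sum_range (fun i => if f₅.coeff i = 0 then 0 else 1)]
      have : (∑ i ∈ Finset.range n, if f₅.coeff i = 0 then 0 else 1)
          = ((Finset.range n).filter (fun i => f₅.coeff i ≠ 0)).card := by
        rw [Finset.card_filter]
        exact Finset.sum_congr rfl (fun i _ => by by_cases h : f₅.coeff i = 0 <;> simp [h])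
      rw [this]
      refine le_trans (Finset.card_le_card ?_) (card_supp_le_succ_natDegree f₅)
      intro i hi
      simp only [Finset.mem_filter] at hi
      exact mem_support_iff.mpr hi.2
    refine le_trans key (Nat.add_le_add_right ?_ 1)
    have hne₀ : f₀ ≠ 0 := hm₀.ne_zero
    have hne₁ : f₁ ≠ 0 := hm₁.ne_zero
    have hne₂ : f₂ ≠ 0 := hm₂.ne_zero
    have hne₃ : f₃ ≠ 0 := hm₃.ne_zero
    have hne₄ : f₄ ≠ 0 := hm₄.ne_zero
    exact le_min (natDegree_le_of_dvd (h54.trans (h43.trans (h32.trans (h21.trans h10)))) hne₀)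
      (le_min (natDegree_le_of_dvd (h54.trans (h43.trans (h32.trans h21))) hne₁)
        (le_min (natDegree_le_of_dvd (h54.trans (h43.trans h32)) hne₂)
          (le_min (natDegree_le_of_dvd (h54.trans h43) hne₃)
            (le_min (natDegree_le_of_dvd h54 hne₄) le_rfl))))
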